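/- Let p be a prime, E a finite nonempty subset of F_p^×, and define for each a ∈ F_p^× the dilate aE = {ae : e ∈ E}. For finite sets M, N₀, N₂ ⊆ F_p with 0 ∉ N₀, the counting function σ(x₁,x₂,y) = #{(m₁,m₂,n,a) ∈ M×M×N₂×N₀ : m₁ ≠ m₂, m₁a = x₁, m₂a = x₂, n = ay in F_p} satisfies Σ_{x₁,x₂,y ∈ F_p} σ(x₁,x₂,y)² ≤ |M|² · E(N₀, N₂), where E(N₀,N₂) is the multiplicative energy #{(a,a',n,n') ∈ N₀²×N₂² : na' = n'a}. -/

import Mathlib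

open Finset

/-- The counting function `σ(x₁,x₂,y)` of quadruples `(m₁,m₂,n,a) ∈ M×M×N₂×N₀` with
`m₁ ≠ m₂`, `m₁a = x₁`, `m₂a = x₂` and `n = ay`. -/
def sigmaCount {p : ℕ} [Fact p.Prime] (M N₂ N₀ : Finset (ZMod p))
    (x₁ x₂ y : ZMod p) : ℕ :=
  ((M ×ˢ M ×ˢ N₂ ×ˢ N₀).filter fun q =>
    q.1 ≠ q.2.1 ∧ q.1 * q.2.2.2 = x₁ ∧ q.2.1 * q.2.2.2 = x₂ ∧ q.2.2.1 = q.2.2.2 * y).card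

/-- The multiplicative energy `E(N₀,N₂) = #{(a,a',n,n') ∈ N₀²×N₂² : na' = n'a}`. -/
def mulEnergy' {p : ℕ} [Fact p.Prime] (N₀ N₂ : Finset (ZMod p)) : ℕ :=
  ((N₀ ×ˢ N₀ ×ˢ N₂ ×ˢ N₂).filter fun q =>
    q.2.2.1 * q.2.1 = q.2.2.2 * q.1).card

/-- Second moment bound: `∑_{x₁,x₂,y} σ(x₁,x₂,y)² ≤ |M|²·E(N₀,N₂)`. -/
theorem stmt17 {p : ℕ} [Fact p.Prime] (M N₀ N₂ : Finset (ZMod p))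
    (hN₀ : ∀ a ∈ N₀, a ≠ 0) :
    ∑ x₁ : ZMod p, ∑ x₂ : ZMod p, ∑ y : ZMod p,
        (sigmaCount M N₂ N₀ x₁ x₂ y) ^ 2 ≤
      M.card ^ 2 * mulEnergy' N₀ N₂ := by
  classical
  set Q : Finset (ZMod p × ZMod p × ZMod p × ZMod p) := M ×ˢ M ×ˢ N₂ ×ˢ N₀ with hQdef
  -- the condition on a single quadruple
  set C : ZMod p × ZMod p × ZMod p × ZMod p → ZMod p → ZMod p → ZMod p → Prop :=
    fun q x₁ x₂ y =>
      q.1 ≠ q.2.1 ∧ q.1 * q.2.2.2 = x₁ ∧ q.2.1 * q.2.2.2 = x₂ ∧ q.2.2.1 = q.2.2.2 * y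
    with hCdef
  -- the pair condition
  set R : (ZMod p × ZMod p × ZMod p × ZMod p) × (ZMod p × ZMod p × ZMod p × ZMod p) → Prop :=
    fun r =>
      r.1.1 ≠ r.1.2.1 ∧ r.2.1 ≠ r.2.2.1 ∧
      r.1.1 * r.1.2.2.2 = r.2.1 * r.2.2.2.2 ∧
      r.1.2.1 * r.1.2.2.2 = r.2.2.1 * r.2.2.2.2 ∧
      r.1.2.2.1 * r.2.2.2.2 = r.2.2.2.1 * r.1.2.2.2
    with hRdef
  have h1 : ∀ x₁ x₂ y : ZMod p, (sigmaCount M N₂ N₀ x₁ x₂ y) ^ 2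
      = ∑ r ∈ Q ×ˢ Q, (if C r.1 x₁ x₂ y ∧ C r.2 x₁ x₂ y then 1 else 0) := by
    intro x₁ x₂ y
    rw [← Finset.card_filter, sigmaCount, sq, ← Finset.card_product, ← Finset.filter_product]
  have swap : ∑ x₁ : ZMod p, ∑ x₂ : ZMod p, ∑ y : ZMod p,
        ∑ r ∈ Q ×ˢ Q, (if C r.1 x₁ x₂ y ∧ C r.2 x₁ x₂ y then 1 else 0)
      = ∑ r ∈ Q ×ˢ Q, ∑ x₁ : ZMod p, ∑ x₂ : ZMod p, ∑ y : ZMod p,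
        (if C r.1 x₁ x₂ y ∧ C r.2 x₁ x₂ y then 1 else 0) := by
    refine (Finset.sum_congr rfl fun x₁ _ => ?_).trans Finset.sum_comm
    refine (Finset.sum_congr rfl fun x₂ _ => ?_).trans Finset.sum_comm
    exact Finset.sum_comm
  have inner : ∀ r ∈ Q ×ˢ Q,
      (∑ x₁ : ZMod p, ∑ x₂ : ZMod p, ∑ y : ZMod p,
        (if C r.1 x₁ x₂ y ∧ C r.2 x₁ x₂ y then 1 else 0))
      ≤ (if R r then 1 else 0 : ℕ) := by
    intro r hr
    by_cases hB : R r
    · -- the triple is unique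
      rw [if_pos hB]
      have hcard : (∑ x₁ : ZMod p, ∑ x₂ : ZMod p, ∑ y : ZMod p,
          (if C r.1 x₁ x₂ y ∧ C r.2 x₁ x₂ y then 1 else 0))
          = ((Finset.univ : Finset (ZMod p × ZMod p × ZMod p)).filter
              fun t => C r.1 t.1 t.2.1 t.2.2 ∧ C r.2 t.1 t.2.1 t.2.2).card := by
        rw [Finset.card_filter]
        rw [Fintype.sum_prod_type]
        exact Finset.sum_congr rfl fun x₁ _ => by rw [Fintype.sum_prod_type]
      rw [hcard]
      rw [Finset.card_le_one]
      rintro ⟨x₁, x₂, y⟩ ht ⟨x₁', x₂', y'⟩ ht'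
      simp only [Finset.mem_filter, Finset.mem_univ, true_and, hCdef] at ht ht'
      obtain ⟨⟨-, h2, h3, h4⟩, -⟩ := ht
      obtain ⟨⟨-, h2', h3', h4'⟩, -⟩ := ht'
      have ha : r.1.2.2.2 ∈ N₀ := by
        have : r.1 ∈ Q := (Finset.mem_product.1 hr).1
        simp only [hQdef, Finset.mem_product] at this
        exact this.2.2.2
      have ha0 : r.1.2.2.2 ≠ 0 := hN₀ _ ha
      have hy : y = y' := by
        apply mul_left_cancel₀ ha0
        rw [← h4, ← h4']
      simp only [Prod.mk.injEq]
      exact ⟨h2 ▸ h2'.symm ▸ rfl, h3 ▸ h3'.symm ▸ rfl, hy⟩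
    · -- no triple satisfies the condition
      rw [if_neg hB]
      have : ∀ x₁ x₂ y : ZMod p, ¬ (C r.1 x₁ x₂ y ∧ C r.2 x₁ x₂ y) := by
        rintro x₁ x₂ y ⟨⟨hd, e1, e2, e3⟩, ⟨hd', e1', e2', e3'⟩⟩
        exact hB ⟨hd, hd', e1.trans e1'.symm, e2.trans e2'.symm, by rw [e3, e3']; ring⟩
      simp [this]
  have step : ∑ x₁ : ZMod p, ∑ x₂ : ZMod p, ∑ y : ZMod p,
        (sigmaCount M N₂ N₀ x₁ x₂ y) ^ 2
      ≤ ((Q ×ˢ Q).filter R).card := by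
    calc ∑ x₁ : ZMod p, ∑ x₂ : ZMod p, ∑ y : ZMod p, (sigmaCount M N₂ N₀ x₁ x₂ y) ^ 2
        = ∑ r ∈ Q ×ˢ Q, ∑ x₁ : ZMod p, ∑ x₂ : ZMod p, ∑ y : ZMod p,
            (if C r.1 x₁ x₂ y ∧ C r.2 x₁ x₂ y then 1 else 0) := by
          simp_rw [h1]; exact swap
      _ ≤ ∑ r ∈ Q ×ˢ Q, (if R r then 1 else 0 : ℕ) := Finset.sum_le_sum inner
      _ = ((Q ×ˢ Q).filter R).card := (Finset.card_filter _ _).symm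
  refine step.trans ?_
  -- inject the pair set into M × M × (energy set)
  have hinj : ((Q ×ˢ Q).filter R).card ≤
      (M ×ˢ M ×ˢ ((N₀ ×ˢ N₀ ×ˢ N₂ ×ˢ N₂).filter fun q =>
        q.2.2.1 * q.2.1 = q.2.2.2 * q.1)).card := by
    apply Finset.card_le_card_of_injOn
      (fun r => (r.1.1, r.1.2.1, (r.1.2.2.2, r.2.2.2.2, r.1.2.2.1, r.2.2.2.1)))
    · rintro r hrR
      rw [Finset.mem_coe, Finset.mem_filter] at hrR
      obtain ⟨hr, hR⟩ := hrR
      rw [Finset.mem_product] at hr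
      obtain ⟨hr1, hr2⟩ := hr
      simp only [hQdef, Finset.mem_product] at hr1 hr2
      simp only [Finset.mem_coe, Finset.mem_product, Finset.mem_filter]
      exact ⟨hr1.1, hr1.2.1, ⟨hr1.2.2.2, hr2.2.2.2, hr1.2.2.1, hr2.2.2.1⟩, hR.2.2.2.2⟩
    · rintro r hrR s hsR heq
      rw [Finset.coe_filter, Set.mem_setOf_eq] at hrR hsR
      obtain ⟨hr, hRr⟩ := hrR
      obtain ⟨hs, hRs⟩ := hsR
      simp only [Prod.mk.injEq] at heq
      obtain ⟨e1, e2, e3, e4, e5, e6⟩ := heq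
      -- a' ≠ 0
      rw [Finset.mem_product] at hr hs
      have ha' : r.2.2.2.2 ∈ N₀ := by
        have := hr.2
        simp only [hQdef, Finset.mem_product] at this
        exact this.2.2.2
      have ha0 : r.2.2.2.2 ≠ 0 := hN₀ _ ha'
      have hm1 : r.2.1 = s.2.1 := by
        apply mul_right_cancel₀ ha0
        calc r.2.1 * r.2.2.2.2 = r.1.1 * r.1.2.2.2 := hRr.2.2.1.symm
          _ = s.1.1 * s.1.2.2.2 := by rw [e1, e3]
          _ = s.2.1 * s.2.2.2.2 := hRs.2.2.1
          _ = s.2.1 * r.2.2.2.2 := by rw [e4]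
      have hm2 : r.2.2.1 = s.2.2.1 := by
        apply mul_right_cancel₀ ha0
        calc r.2.2.1 * r.2.2.2.2 = r.1.2.1 * r.1.2.2.2 := hRr.2.2.2.1.symm
          _ = s.1.2.1 * s.1.2.2.2 := by rw [e2, e3]
          _ = s.2.2.1 * s.2.2.2.2 := hRs.2.2.2.1
          _ = s.2.2.1 * r.2.2.2.2 := by rw [e4]
      have h1eq : r.1 = s.1 := by
        ext <;> simp [e1, e2, e3, e5]
      have h2eq : r.2 = s.2 := by
        ext <;> simp [hm1, hm2, e4, e6]
      exact Prod.ext h1eq h2eq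
  refine hinj.trans ?_
  rw [Finset.card_product, Finset.card_product]
  rw [mulEnergy']
  exact le_of_eq (by ring)
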